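/- Let μ be a probability measure on the K-simplex with v = E_μ[√p] ≠ 0 (expectation of the elementwise square root). Then the maximum of E_μ[B(p,q)] over q in the K-simplex equals ‖v‖, attained at q_k = v_k²/‖v‖². -/
import Mathlib


open MeasureTheory

theorem bayes_estimator_one_minus_B_measure {K : ℕ}
    (μ : Measure (Fin K → ℝ)) [IsProbabilityMeasure μ]
    (hsupp : ∀ᵐ p ∂μ, (∀ k, 0 ≤ p k) ∧ ∑ k, p k = 1)
    (v : Fin K → ℝ) (hv : v = fun k => ∫ p, Real.sqrt (p k) ∂μ)
    (hv0 : v ≠ 0) :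
    let nv : ℝ := Real.sqrt (∑ k, (v k) ^ 2)
    let qstar : Fin K → ℝ := fun k => (v k) ^ 2 / nv ^ 2
    (∀ k, 0 ≤ qstar k) ∧ (∑ k, qstar k = 1) ∧
    (∫ p, (∑ k, Real.sqrt (p k * qstar k)) ∂μ) = nv ∧
    (∀ q : Fin K → ℝ, (∀ k, 0 ≤ q k) → (∑ k, q k = 1) →
      (∫ p, (∑ k, Real.sqrt (p k * q k)) ∂μ) ≤ nv) := by
  intro nv qstar
  have hvk : ∀ k, 0 ≤ v k := by
    intro k; rw [hv]
    exact integral_nonneg fun p => Real.sqrt_nonneg _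
  have hsum_nonneg : (0:ℝ) ≤ ∑ k, (v k) ^ 2 :=
    Finset.sum_nonneg fun k _ => sq_nonneg _
  have hnv2 : nv ^ 2 = ∑ k, (v k) ^ 2 := Real.sq_sqrt hsum_nonneg
  have hsum_pos : 0 < ∑ k, (v k) ^ 2 := by
    rcases hsum_nonneg.lt_or_eq with h | h
    · exact h
    · exfalso; apply hv0; funext k
      have := (Finset.sum_eq_zero_iff_of_nonneg (fun k _ => sq_nonneg (v k))).1 h.symm k
        (Finset.mem_univ k)
      exact pow_eq_zero_iff two_ne_zero |>.1 this
  have hnvpos : 0 < nv := Real.sqrt_pos.2 hsum_pos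
  have hint : ∀ k : Fin K, Integrable (fun p : Fin K → ℝ => Real.sqrt (p k)) μ := by
    intro k
    apply Integrable.mono' (integrable_const (1:ℝ))
    · exact ((measurable_pi_apply k).sqrt).aestronglyMeasurable
    · filter_upwards [hsupp] with p hp
      have h1 : p k ≤ 1 := by
        calc p k ≤ ∑ j, p j := Finset.single_le_sum (fun j _ => hp.1 j) (Finset.mem_univ k)
          _ = 1 := hp.2
      rw [Real.norm_eq_abs, abs_of_nonneg (Real.sqrt_nonneg _)]
      exact Real.sqrt_le_one.2 h1
  have key : ∀ q : Fin K → ℝ, (∀ k, 0 ≤ q k) →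
      (∫ p, (∑ k, Real.sqrt (p k * q k)) ∂μ) = ∑ k, Real.sqrt (q k) * v k := by
    intro q hq
    have hae : ∀ᵐ p ∂μ, (∑ k, Real.sqrt (p k * q k))
        = ∑ k, Real.sqrt (p k) * Real.sqrt (q k) := by
      filter_upwards [hsupp] with p hp
      exact Finset.sum_congr rfl fun k _ => Real.sqrt_mul (hp.1 k) _
    rw [integral_congr_ae hae, integral_finset_sum]
    · refine Finset.sum_congr rfl fun k _ => ?_
      rw [integral_mul_const, hv, mul_comm]
    · intro k _; exact (hint k).mul_const _
  have hq0 : ∀ k, 0 ≤ qstar k := fun k => by positivity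
  have hq1 : ∑ k, qstar k = 1 := by
    simp only [qstar]
    rw [← Finset.sum_div, ← hnv2, div_self (by positivity)]
  refine ⟨hq0, hq1, ?_, ?_⟩
  · rw [key qstar hq0]
    have hsq : ∀ k, Real.sqrt (qstar k) = v k / nv := by
      intro k
      simp only [qstar]
      rw [Real.sqrt_div (sq_nonneg _), Real.sqrt_sq (hvk k), Real.sqrt_sq hnvpos.le]
    calc ∑ k, Real.sqrt (qstar k) * v k = ∑ k, (v k)^2 / nv := by
          refine Finset.sum_congr rfl fun k _ => ?_
          rw [hsq k, div_mul_eq_mul_div, sq]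
      _ = (∑ k, (v k)^2) / nv := by rw [Finset.sum_div]
      _ = nv := by rw [← hnv2, sq, mul_div_assoc, div_self hnvpos.ne', mul_one]
  · intro q hq hq1'
    rw [key q hq]
    have h2 : (∑ k, Real.sqrt (q k) * v k) ^ 2
        ≤ (∑ k, (Real.sqrt (q k))^2) * ∑ k, (v k)^2 :=
      Finset.sum_mul_sq_le_sq_mul_sq Finset.univ _ _
    have h3 : ∑ k, (Real.sqrt (q k))^2 = 1 := by
      rw [← hq1']; exact Finset.sum_congr rfl fun k _ => Real.sq_sqrt (hq k)
    rw [h3, one_mul] at h2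
    have hnn : 0 ≤ ∑ k, Real.sqrt (q k) * v k :=
      Finset.sum_nonneg fun k _ => mul_nonneg (Real.sqrt_nonneg _) (hvk k)
    calc ∑ k, Real.sqrt (q k) * v k
        = Real.sqrt ((∑ k, Real.sqrt (q k) * v k)^2) := (Real.sqrt_sq hnn).symm
      _ ≤ nv := Real.sqrt_le_sqrt h2
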